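/- Let R be a ring, let N and M be ℤ-indexed chain complexes of R-modules, let (f, g, φ) be a contraction from N to M, and let δ be a perturbation of N that is pointwise nilpotent with respect to φ. Define Σx = Σ_{i≥0} (−1)^i (φδ)^i x, f_δ = f ∘ (id − δ ∘ Σ ∘ φ), g_δ = Σ ∘ g, and φ_δ = Σ ∘ φ. Then the annihilation side conditions hold for the perturbed data: f_δ ∘ φ_δ = 0, φ_δ ∘ g_δ = 0, and φ_δ ∘ φ_δ = 0. -/
import Mathlib


/-- A contraction between ℤ-graded chain complexes of `R`-modules, presented via total
modules `N` and `M` with internal ℤ-gradings `𝒩`, `ℳ`, differentials `dN`, `dM` of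
degree `-1` squaring to zero, chain maps `f : N → M`, `g : M → N` of degree `0`, and a
homotopy operator `φ : N → N` of degree `+1`, satisfying
`f ∘ g = id`, `g ∘ f + φ ∘ dN + dN ∘ φ = id`, `f ∘ φ = 0`, `φ ∘ g = 0`, `φ ∘ φ = 0`. -/
structure Contraction (R : Type) [Ring R]
    (N : Type) [AddCommGroup N] [Module R N]
    (M : Type) [AddCommGroup M] [Module R M]
    (𝒩 : ℤ → Submodule R N) (ℳ : ℤ → Submodule R M)
    (dN : N →ₗ[R] N) (dM : M →ₗ[R] M)
    (f : N →ₗ[R] M) (g : M →ₗ[R] N) (φ : N →ₗ[R] N) : Prop where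
  gradedN : DirectSum.IsInternal 𝒩
  gradedM : DirectSum.IsInternal ℳ
  dN_deg : ∀ i : ℤ, ∀ x ∈ 𝒩 i, dN x ∈ 𝒩 (i - 1)
  dM_deg : ∀ i : ℤ, ∀ x ∈ ℳ i, dM x ∈ ℳ (i - 1)
  dN_sq : dN ∘ₗ dN = 0
  dM_sq : dM ∘ₗ dM = 0
  f_deg : ∀ i : ℤ, ∀ x ∈ 𝒩 i, f x ∈ ℳ i
  g_deg : ∀ i : ℤ, ∀ x ∈ ℳ i, g x ∈ 𝒩 i
  φ_deg : ∀ i : ℤ, ∀ x ∈ 𝒩 i, φ x ∈ 𝒩 (i + 1)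
  f_chain : dM ∘ₗ f = f ∘ₗ dN
  g_chain : dN ∘ₗ g = g ∘ₗ dM
  fg : f ∘ₗ g = LinearMap.id
  homotopy : g ∘ₗ f + φ ∘ₗ dN + dN ∘ₗ φ = LinearMap.id
  fφ : f ∘ₗ φ = 0
  φg : φ ∘ₗ g = 0
  φφ : φ ∘ₗ φ = 0

/-- The annihilation side conditions hold for the perturbed data:
`f_δ ∘ φ_δ = 0`, `φ_δ ∘ g_δ = 0` and `φ_δ ∘ φ_δ = 0`, where
`f_δ = f ∘ (id - δ ∘ S ∘ φ)`, `g_δ = S ∘ g` and `φ_δ = S ∘ φ`. -/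
theorem perturbed_side_conditions
    (R : Type) [Ring R]
    (N : Type) [AddCommGroup N] [Module R N]
    (M : Type) [AddCommGroup M] [Module R M]
    (𝒩 : ℤ → Submodule R N) (ℳ : ℤ → Submodule R M)
    (dN : N →ₗ[R] N) (dM : M →ₗ[R] M)
    (f : N →ₗ[R] M) (g : M →ₗ[R] N) (φ : N →ₗ[R] N)
    (hc : Contraction R N M 𝒩 ℳ dN dM f g φ)
    (δ : N →ₗ[R] N)
    (δ_deg : ∀ i : ℤ, ∀ x ∈ 𝒩 i, δ x ∈ 𝒩 (i - 1))
    (δ_pert : (dN + δ) ∘ₗ (dN + δ) = 0)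
    (δ_nil : ∀ x : N, ∃ m : ℕ, ((φ ∘ₗ δ) ^ m) x = 0)
    (S : N →ₗ[R] N)
    (hS : ∀ (x : N) (m : ℕ), ((φ ∘ₗ δ) ^ m) x = 0 →
      S x = ∑ i ∈ Finset.range m, ((-1 : ℤ) ^ i) • (((φ ∘ₗ δ) ^ i) x)) :
    ((f ∘ₗ (LinearMap.id - δ ∘ₗ S ∘ₗ φ)) ∘ₗ (S ∘ₗ φ) = 0) ∧
    ((S ∘ₗ φ) ∘ₗ (S ∘ₗ g) = 0) ∧
    ((S ∘ₗ φ) ∘ₗ (S ∘ₗ φ) = 0) := by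

  have hpow : ∀ (j : ℕ) (x : N), ((φ ∘ₗ δ) ^ (j+1)) x = φ (δ (((φ ∘ₗ δ) ^ j) x)) := by
    intro j x
    rw [pow_succ']
    rfl
  have hφφ : ∀ y : N, φ (φ y) = 0 := by
    intro y
    have := LinearMap.ext_iff.mp hc.φφ y
    simpa using this
  have hfφ : ∀ y : N, f (φ y) = 0 := by
    intro y
    have := LinearMap.ext_iff.mp hc.fφ y
    simpa using this
  have hφg : ∀ y : M, φ (g y) = 0 := by
    intro y
    have := LinearMap.ext_iff.mp hc.φg y
    simpa using this
  have hSx : ∀ x : N, ∃ m : ℕ, S x = x + ∑ i ∈ Finset.range m,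
      ((-1 : ℤ) ^ (i+1)) • (φ (δ (((φ ∘ₗ δ) ^ i) x))) := by
    intro x
    obtain ⟨m, hm⟩ := δ_nil x
    refine ⟨m, ?_⟩
    have hm' : ((φ ∘ₗ δ) ^ (m+1)) x = 0 := by
      rw [hpow m x, hm]; simp
    rw [hS x (m+1) hm', Finset.sum_range_succ']
    simp only [pow_zero, Module.End.one_apply, one_smul]
    rw [add_comm]
    congr 1
    refine Finset.sum_congr rfl fun i _ => ?_
    rw [hpow i x]
  have hφS : ∀ x : N, φ (S x) = φ x := by
    intro x
    obtain ⟨m, hm⟩ := hSx x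
    rw [hm, map_add, map_sum]
    have : ∀ i ∈ Finset.range m, φ (((-1 : ℤ) ^ (i+1)) • (φ (δ (((φ ∘ₗ δ) ^ i) x)))) = 0 := by
      intro i _
      rw [map_zsmul, hφφ, smul_zero]
    rw [Finset.sum_congr rfl this]
    simp
  have hfS : ∀ x : N, f (S x) = f x := by
    intro x
    obtain ⟨m, hm⟩ := hSx x
    rw [hm, map_add, map_sum]
    have : ∀ i ∈ Finset.range m, f (((-1 : ℤ) ^ (i+1)) • (φ (δ (((φ ∘ₗ δ) ^ i) x)))) = 0 := by
      intro i _
      rw [map_zsmul, hfφ, smul_zero]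
    rw [Finset.sum_congr rfl this]
    simp
  refine ⟨?_, ?_, ?_⟩
  · ext x
    simp only [LinearMap.comp_apply, LinearMap.sub_apply, LinearMap.id_apply, map_sub,
      LinearMap.zero_apply]
    rw [hφS (φ x), hφφ, map_zero, map_zero, map_zero, hfS, hfφ, sub_zero]
  · ext x
    simp only [LinearMap.comp_apply, LinearMap.zero_apply]
    rw [hφS (g x), hφg, map_zero]
  · ext x
    simp only [LinearMap.comp_apply, LinearMap.zero_apply]
    rw [hφS (φ x), hφφ, map_zero]
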